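/- Let $H$ be a real $k \times N$ matrix whose rows are pairwise orthogonal and each have $\ell_2$ norm exactly $L$ (e.g., $k$ rows of a $2^d \times 2^d$ Hadamard matrix with $N = 2^d$, $L = 2^{d/2}$), and suppose all entries of $H$ are in $\{-1,+1\}$. Then for $\alpha = 1/2$, the approximate factorization norm satisfies $\gamma_2(H, 1/2) \ge \frac{\sqrt{kN}}{2L}$. -/

import Mathlib

open scoped BigOperators

/-- Maximum ℓ₂ norm of a row. -/
noncomputable def rowNorm {ι d : Type*} [Fintype d] (R : Matrix ι d ℝ) : ℝ :=
  ⨆ i, Real.sqrt (∑ j, (R i j) ^ 2)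

/-- Maximum ℓ₂ norm of a column. -/
noncomputable def colNorm {d κ : Type*} [Fintype d] (A : Matrix d κ ℝ) : ℝ :=
  ⨆ j, Real.sqrt (∑ i, (A i j) ^ 2)

/-- The γ₂ factorization norm. -/
noncomputable def gamma2 {ι κ : Type*} [Fintype ι] [Fintype κ] (M : Matrix ι κ ℝ) : ℝ :=
  sInf {c | ∃ d : ℕ, ∃ R : Matrix ι (Fin d) ℝ, ∃ A : Matrix (Fin d) κ ℝ,
    R * A = M ∧ c = rowNorm R * colNorm A}

/-- Maximum absolute entry (the 1→∞ operator norm). -/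
noncomputable def linfNorm {ι κ : Type*} (M : Matrix ι κ ℝ) : ℝ :=
  ⨆ i, ⨆ j, |M i j|

/-- The approximate γ₂ norm. -/
noncomputable def gamma2Approx {ι κ : Type*} [Fintype ι] [Fintype κ]
    (W : Matrix ι κ ℝ) (α : ℝ) : ℝ :=
  sInf {c | ∃ W' : Matrix ι κ ℝ, linfNorm (W - W') ≤ α ∧ c = gamma2 W'}

/-- Matrix inner product. -/
def bullet {ι κ : Type*} [Fintype ι] [Fintype κ] (M N : Matrix ι κ ℝ) : ℝ :=
  ∑ i, ∑ j, M i j * N i j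

/-- Entrywise ℓ₁ norm. -/
def l1NormM {ι κ : Type*} [Fintype ι] [Fintype κ] (M : Matrix ι κ ℝ) : ℝ :=
  ∑ i, ∑ j, |M i j|

/-- The dual γ₂ norm. -/
noncomputable def gamma2Star {ι κ : Type*} [Fintype ι] [Fintype κ] (U : Matrix ι κ ℝ) : ℝ :=
  sSup {c | ∃ V : Matrix ι κ ℝ, gamma2 V ≤ 1 ∧ c = bullet U V}

/-- Spectral norm (2→2 operator norm). -/
noncomputable def norm2to2 {ι κ : Type*} [Fintype ι] [Fintype κ] (M : Matrix ι κ ℝ) : ℝ :=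
  sSup {c | ∃ x : κ → ℝ, (∑ j, (x j) ^ 2) ≤ 1 ∧ c = Real.sqrt (∑ i, (M.mulVec x i) ^ 2)}

/-- ∞→2 operator norm. -/
noncomputable def normInfTo2 {ι κ : Type*} [Fintype ι] [Fintype κ] (M : Matrix ι κ ℝ) : ℝ :=
  sSup {c | ∃ x : κ → ℝ, (∀ j, |x j| ≤ 1) ∧ c = Real.sqrt (∑ i, (M.mulVec x i) ^ 2)}

set_option maxHeartbeats 1000000


lemma bessel {k N : ℕ} {L : ℝ} (hL : 0 < L) (H : Matrix (Fin k) (Fin N) ℝ)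
    (horth : ∀ i i', i ≠ i' → ∑ j, H i j * H i' j = 0)
    (hnorm : ∀ i, ∑ j, (H i j) ^ 2 = L ^ 2) (v : Fin N → ℝ) :
    ∑ i, (∑ j, H i j * v j) ^ 2 ≤ L ^ 2 * ∑ j, v j ^ 2 := by
  have hL2 : (0:ℝ) < L ^ 2 := by positivity
  set c : Fin k → ℝ := fun i => ∑ j, H i j * v j with hc
  have key : 0 ≤ ∑ j, (v j - ∑ i, (c i / L ^ 2) * H i j) ^ 2 :=
    Finset.sum_nonneg fun _ _ => sq_nonneg _
  have e1 : ∀ j, (v j - ∑ i, (c i / L ^ 2) * H i j) ^ 2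
      = v j ^ 2 - 2 * (∑ i, (c i / L ^ 2) * (H i j * v j))
        + ∑ i, ∑ i', (c i / L ^ 2) * (c i' / L ^ 2) * (H i j * H i' j) := by
    intro j
    rw [sub_sq, sq (∑ i : Fin k, c i / L ^ 2 * H i j), Finset.sum_mul_sum]
    have h1 : v j * ∑ i, (c i / L ^ 2) * H i j = ∑ i, (c i / L ^ 2) * (H i j * v j) := by
      rw [Finset.mul_sum]; exact Finset.sum_congr rfl fun i _ => by ring
    have h2 : ∀ i i', (c i / L ^ 2) * H i j * ((c i' / L ^ 2) * H i' j)
        = (c i / L ^ 2) * (c i' / L ^ 2) * (H i j * H i' j) := fun i i' => by ring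
    rw [mul_assoc 2 (v j), h1]
    congr 1
    exact Finset.sum_congr rfl fun i _ => Finset.sum_congr rfl fun i' _ => h2 i i'
  have e2 : ∑ j, (v j - ∑ i, (c i / L ^ 2) * H i j) ^ 2
      = ∑ j, v j ^ 2 - (∑ i, (c i) ^ 2) / L ^ 2 := by
    rw [Finset.sum_congr rfl fun j _ => e1 j]
    rw [Finset.sum_add_distrib, Finset.sum_sub_distrib]
    have hmid : ∑ j, 2 * (∑ i, (c i / L ^ 2) * (H i j * v j))
        = 2 * ((∑ i, (c i) ^ 2) / L ^ 2) := by
      rw [← Finset.mul_sum, Finset.sum_comm]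
      congr 1
      rw [Finset.sum_div]
      refine Finset.sum_congr rfl fun i _ => ?_
      rw [← Finset.mul_sum]
      have : ∑ j, H i j * v j = c i := rfl
      rw [this]; ring
    have hlast : ∑ j, ∑ i, ∑ i', (c i / L ^ 2) * (c i' / L ^ 2) * (H i j * H i' j)
        = (∑ i, (c i) ^ 2) / L ^ 2 := by
      rw [Finset.sum_comm]
      have : ∀ i, ∑ j, ∑ i', (c i / L ^ 2) * (c i' / L ^ 2) * (H i j * H i' j)
          = (c i) ^ 2 / L ^ 2 := by
        intro i
        rw [Finset.sum_comm]
        have hinner : ∀ i', ∑ j, (c i / L ^ 2) * (c i' / L ^ 2) * (H i j * H i' j)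
            = (c i / L ^ 2) * (c i' / L ^ 2) * (∑ j, H i j * H i' j) := fun i' => by
          rw [Finset.mul_sum]
        rw [Finset.sum_congr rfl fun i' _ => hinner i']
        rw [Finset.sum_eq_single i]
        · have : ∑ j, H i j * H i j = L ^ 2 := by
            rw [← hnorm i]; exact Finset.sum_congr rfl fun j _ => by ring
          rw [this]
          field_simp
        · intro i' _ hne
          rw [horth i i' (fun h => hne h.symm)]
          · ring
        · intro h; exact absurd (Finset.mem_univ i) h
      rw [Finset.sum_congr rfl fun i _ => this i, Finset.sum_div]
    rw [hmid, hlast]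
    ring
  rw [e2] at key
  have h3 : (∑ i, c i ^ 2) / L ^ 2 ≤ ∑ j, v j ^ 2 := by linarith
  rw [div_le_iff₀ hL2] at h3
  have h4 : ∑ i, (∑ j, H i j * v j) ^ 2 = ∑ i, c i ^ 2 := rfl
  rw [h4]
  linarith [h3]

lemma abs_le_linf {k N : ℕ} (X : Matrix (Fin k) (Fin N) ℝ) (i : Fin k) (j : Fin N) :
    |X i j| ≤ linfNorm X := by
  unfold linfNorm
  refine le_trans (le_ciSup (f := fun j => |X i j|) (Set.Finite.bddAbove (Set.finite_range _)) j) ?_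
  exact le_ciSup (f := fun i => ⨆ j, |X i j|) (Set.Finite.bddAbove (Set.finite_range _)) i

lemma sqrt_le_rowNorm {k d : ℕ} (R : Matrix (Fin k) (Fin d) ℝ) (i : Fin k) :
    Real.sqrt (∑ l, (R i l) ^ 2) ≤ rowNorm R :=
  le_ciSup (f := fun i => Real.sqrt (∑ l, (R i l) ^ 2)) (Set.Finite.bddAbove (Set.finite_range _)) i

lemma sqrt_le_colNorm {d N : ℕ} (A : Matrix (Fin d) (Fin N) ℝ) (j : Fin N) :
    Real.sqrt (∑ l, (A l j) ^ 2) ≤ colNorm A :=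
  le_ciSup (f := fun j => Real.sqrt (∑ l, (A l j) ^ 2)) (Set.Finite.bddAbove (Set.finite_range _)) j

lemma rowNorm_nonneg {k d : ℕ} (R : Matrix (Fin k) (Fin d) ℝ) : 0 ≤ rowNorm R :=
  Real.iSup_nonneg fun _ => Real.sqrt_nonneg _

lemma colNorm_nonneg {d N : ℕ} (A : Matrix (Fin d) (Fin N) ℝ) : 0 ≤ colNorm A :=
  Real.iSup_nonneg fun _ => Real.sqrt_nonneg _

lemma gamma2_nonneg {k N : ℕ} (M : Matrix (Fin k) (Fin N) ℝ) : 0 ≤ gamma2 M := by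
  unfold gamma2
  rcases Set.eq_empty_or_nonempty {c | ∃ d : ℕ, ∃ R : Matrix (Fin k) (Fin d) ℝ,
      ∃ A : Matrix (Fin d) (Fin N) ℝ, R * A = M ∧ c = rowNorm R * colNorm A} with h | h
  · rw [h, Real.sInf_empty]
  · refine le_csInf h ?_
    rintro c ⟨d, R, A, -, rfl⟩
    exact mul_nonneg (rowNorm_nonneg R) (colNorm_nonneg A)

lemma factor_lb {k N d : ℕ} {L : ℝ} (hL : 0 < L)
    (H W' : Matrix (Fin k) (Fin N) ℝ)
    (hentry : ∀ i j, H i j = 1 ∨ H i j = -1)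
    (horth : ∀ i i', i ≠ i' → ∑ j, H i j * H i' j = 0)
    (hnorm : ∀ i, ∑ j, (H i j) ^ 2 = L ^ 2)
    (hW : linfNorm (H - W') ≤ 1 / 2)
    (R : Matrix (Fin k) (Fin d) ℝ) (A : Matrix (Fin d) (Fin N) ℝ)
    (hRA : R * A = W') :
    Real.sqrt ((k : ℝ) * N) / (2 * L) ≤ rowNorm R * colNorm A := by
  rcases Nat.eq_zero_or_pos k with hk | hk
  · subst hk
    simp only [Nat.cast_zero, zero_mul, Real.sqrt_zero, zero_div]
    exact mul_nonneg (rowNorm_nonneg R) (colNorm_nonneg A)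
  have i0 : Fin k := ⟨0, hk⟩
  have hsq : ∀ i j, (H i j) ^ 2 = 1 := fun i j => by
    rcases hentry i j with h | h <;> rw [h] <;> norm_num
  have hNL : (N : ℝ) = L ^ 2 := by
    rw [← hnorm i0]
    simp [hsq]
  have hNpos : (0:ℝ) < (N : ℝ) := by rw [hNL]; positivity
  set P := rowNorm R with hPdef
  set C := colNorm A with hCdef
  have hP : 0 ≤ P := rowNorm_nonneg R
  have hC : 0 ≤ C := colNorm_nonneg A
  set S := ∑ i, ∑ j, W' i j * H i j with hSdef
  -- lower bound on S
  have habs : ∀ i j, (H i j - W' i j) * H i j ≤ 1 / 2 := by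
    intro i j
    have h1 : |H i j| = 1 := by rcases hentry i j with h | h <;> rw [h] <;> norm_num
    calc (H i j - W' i j) * H i j ≤ |(H i j - W' i j) * H i j| := le_abs_self _
      _ = |(H - W') i j| * |H i j| := by rw [abs_mul]; rfl
      _ ≤ (1 / 2) * 1 := by
          refine mul_le_mul (le_trans (abs_le_linf _ i j) hW) (le_of_eq h1)
            (abs_nonneg _) (by norm_num)
      _ = 1 / 2 := by norm_num
  have hlow : (k : ℝ) * N / 2 ≤ S := by
    have hsplit : S = (∑ i, ∑ j, (H i j) ^ 2) - ∑ i, ∑ j, (H i j - W' i j) * H i j := by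
      rw [← Finset.sum_sub_distrib]
      refine Finset.sum_congr rfl fun i _ => ?_
      rw [← Finset.sum_sub_distrib]
      exact Finset.sum_congr rfl fun j _ => by ring
    have h1 : ∑ i, ∑ j, (H i j) ^ 2 = (k : ℝ) * N := by simp [hsq]
    have h2 : ∑ i, ∑ j, (H i j - W' i j) * H i j ≤ (k : ℝ) * N / 2 := by
      calc ∑ i, ∑ j, (H i j - W' i j) * H i j
          ≤ ∑ i : Fin k, ∑ j : Fin N, (1 / 2 : ℝ) := by
            refine Finset.sum_le_sum fun i _ => Finset.sum_le_sum fun j _ => habs i j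
        _ = (k : ℝ) * N / 2 := by simp; ring
    rw [hsplit, h1]
    linarith
  -- rewrite S as a factorization sum
  have hrew : S = ∑ l, ∑ i, R i l * (∑ j, H i j * A l j) := by
    rw [hSdef, ← hRA]
    simp only [Matrix.mul_apply]
    have hper : ∀ i, ∑ j, (∑ l, R i l * A l j) * H i j
        = ∑ l, R i l * (∑ j, H i j * A l j) := by
      intro i
      calc ∑ j, (∑ l, R i l * A l j) * H i j
          = ∑ j, ∑ l, R i l * A l j * H i j :=
            Finset.sum_congr rfl fun j _ => by rw [Finset.sum_mul]
        _ = ∑ l, ∑ j, R i l * A l j * H i j := Finset.sum_comm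
        _ = ∑ l, R i l * (∑ j, H i j * A l j) :=
            Finset.sum_congr rfl fun l _ => by
              rw [Finset.mul_sum]
              exact Finset.sum_congr rfl fun j _ => by ring
    rw [Finset.sum_congr rfl fun i _ => hper i]
    exact Finset.sum_comm
  -- Cauchy–Schwarz
  have csq := Finset.sum_mul_sq_le_sq_mul_sq Finset.univ
    (fun p : Fin d × Fin k => R p.2 p.1)
    (fun p : Fin d × Fin k => ∑ j, H p.2 j * A p.1 j)
  rw [Fintype.sum_prod_type, Fintype.sum_prod_type, Fintype.sum_prod_type] at csq
  rw [← hrew] at csq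
  -- bound the two factors
  have hRsum : ∑ l, ∑ i, (R i l) ^ 2 ≤ (k : ℝ) * P ^ 2 := by
    rw [Finset.sum_comm]
    calc ∑ i, ∑ l, (R i l) ^ 2 ≤ ∑ i : Fin k, P ^ 2 := by
          refine Finset.sum_le_sum fun i _ => ?_
          have h1 := sqrt_le_rowNorm R i
          have h2 : 0 ≤ ∑ l, (R i l) ^ 2 := Finset.sum_nonneg fun _ _ => sq_nonneg _
          calc ∑ l, (R i l) ^ 2 = (Real.sqrt (∑ l, (R i l) ^ 2)) ^ 2 := (Real.sq_sqrt h2).symm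
            _ ≤ P ^ 2 := pow_le_pow_left₀ (Real.sqrt_nonneg _) h1 2
      _ = (k : ℝ) * P ^ 2 := by simp [mul_comm]
  have hAsum : ∑ l, ∑ i, (∑ j, H i j * A l j) ^ 2 ≤ L ^ 2 * ((N : ℝ) * C ^ 2) := by
    calc ∑ l, ∑ i, (∑ j, H i j * A l j) ^ 2
        ≤ ∑ l, L ^ 2 * ∑ j, (A l j) ^ 2 :=
          Finset.sum_le_sum fun l _ => bessel hL H horth hnorm (fun j => A l j)
      _ = L ^ 2 * ∑ j, ∑ l, (A l j) ^ 2 := by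
          rw [← Finset.mul_sum, Finset.sum_comm]
      _ ≤ L ^ 2 * ((N : ℝ) * C ^ 2) := by
          refine mul_le_mul_of_nonneg_left ?_ (by positivity)
          calc ∑ j, ∑ l, (A l j) ^ 2 ≤ ∑ j : Fin N, C ^ 2 := by
                refine Finset.sum_le_sum fun j _ => ?_
                have h1 := sqrt_le_colNorm A j
                have h2 : 0 ≤ ∑ l, (A l j) ^ 2 := Finset.sum_nonneg fun _ _ => sq_nonneg _
                calc ∑ l, (A l j) ^ 2 = (Real.sqrt (∑ l, (A l j) ^ 2)) ^ 2 :=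
                      (Real.sq_sqrt h2).symm
                  _ ≤ C ^ 2 := pow_le_pow_left₀ (Real.sqrt_nonneg _) h1 2
            _ = (N : ℝ) * C ^ 2 := by simp [mul_comm]
  have hS2 : S ^ 2 ≤ ((k : ℝ) * N) * (L * P * C) ^ 2 := by
    have h1 : S ^ 2 ≤ ((k : ℝ) * P ^ 2) * (L ^ 2 * ((N : ℝ) * C ^ 2)) := by
      refine le_trans csq ?_
      refine mul_le_mul hRsum hAsum ?_ (by positivity)
      exact Finset.sum_nonneg fun l _ => Finset.sum_nonneg fun i _ => sq_nonneg _
    calc S ^ 2 ≤ ((k : ℝ) * P ^ 2) * (L ^ 2 * ((N : ℝ) * C ^ 2)) := h1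
      _ = ((k : ℝ) * N) * (L * P * C) ^ 2 := by ring
  -- finish
  set s := Real.sqrt ((k : ℝ) * N) with hsdef
  have hkN : (0:ℝ) < (k : ℝ) * N := by positivity
  have hs2 : s ^ 2 = (k : ℝ) * N := Real.sq_sqrt (le_of_lt hkN)
  have hspos : 0 < s := Real.sqrt_pos.mpr hkN
  have h3 : (s ^ 2 / 2) ^ 2 ≤ S ^ 2 := by
    have : s ^ 2 / 2 ≤ S := by rw [hs2]; exact hlow
    exact pow_le_pow_left₀ (by positivity) this 2
  have h4 : (s ^ 2 / 2) ^ 2 ≤ s ^ 2 * (L * P * C) ^ 2 := by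
    rw [hs2] at *
    linarith
  have h5 : (s / 2) ^ 2 ≤ (L * P * C) ^ 2 := by
    have he : (s ^ 2 / 2) ^ 2 = s ^ 2 * (s / 2) ^ 2 := by ring
    rw [he] at h4
    exact le_of_mul_le_mul_left h4 (by positivity)
  have h6 : s / 2 ≤ L * P * C := by
    have := Real.sqrt_le_sqrt (le_of_lt (lt_of_lt_of_le (by positivity) (le_refl _)))
    calc s / 2 = Real.sqrt ((s / 2) ^ 2) := (Real.sqrt_sq (by positivity)).symm
      _ ≤ Real.sqrt ((L * P * C) ^ 2) := Real.sqrt_le_sqrt h5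
      _ = L * P * C := Real.sqrt_sq (by positivity)
  rw [div_le_iff₀ (by positivity : (0:ℝ) < 2 * L)]
  nlinarith [h6]

/-- Lower bound on the approximate γ₂ norm of a ±1 matrix with pairwise orthogonal rows
of ℓ₂ norm exactly `L`. -/
theorem gamma2Approx_hadamard_lb (k N : ℕ) (L : ℝ) (hL : 0 < L)
    (H : Matrix (Fin k) (Fin N) ℝ)
    (hentry : ∀ i j, H i j = 1 ∨ H i j = -1)
    (horth : ∀ i i', i ≠ i' → ∑ j, H i j * H i' j = 0)
    (hnorm : ∀ i, ∑ j, (H i j) ^ 2 = L ^ 2) :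
    gamma2Approx H (1 / 2) ≥ Real.sqrt ((k : ℝ) * N) / (2 * L) := by
  rw [ge_iff_le]
  unfold gamma2Approx
  have hmem : gamma2 H ∈ {c | ∃ W' : Matrix (Fin k) (Fin N) ℝ,
      linfNorm (H - W') ≤ 1 / 2 ∧ c = gamma2 W'} := by
    refine ⟨H, ?_, rfl⟩
    rw [sub_self]
    unfold linfNorm
    refine Real.iSup_le (fun i => Real.iSup_le (fun j => by simp) (by norm_num)) (by norm_num)
  refine le_csInf ⟨_, hmem⟩ ?_
  rintro c ⟨W', hW, rfl⟩
  unfold gamma2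
  refine le_csInf ⟨rowNorm W' * colNorm (1 : Matrix (Fin N) (Fin N) ℝ), N, W', 1,
    Matrix.mul_one W', rfl⟩ ?_
  rintro c ⟨d, R, A, hRA, rfl⟩
  exact factor_lb hL H W' hentry horth hnorm hW R A hRA
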